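/- Let H be a bialgebra over k, let C be a left H-module (a k-vector space with a left H-action), and let M be a left H-comodule with coaction m ↦ Σ m₍₋₁₎⊗m₍₀₎ ∈ H⊗M. For n ≥ 0 define the k-linear operator τ_n on C^{⊗(n+1)}⊗M by τ_n(c⁰⊗c¹⊗⋯⊗cⁿ⊗m) = c¹⊗⋯⊗cⁿ⊗(m₍₋₁₎•c⁰)⊗m₍₀₎. Then the (n+1)-fold iterate of τ_n is given by the coaction twist: τ_n^{n+1}(c⁰⊗⋯⊗cⁿ⊗m) = Σ (m₍₋₁₎•(c⁰⊗⋯⊗cⁿ))⊗m₍₀₎, where H acts diagonally on C^{⊗(n+1)} via iterated comultiplication, h•(c⁰⊗⋯⊗cⁿ) = Σ (h₍₁₎•c⁰)⊗⋯⊗(h₍ₙ₊₁₎•cⁿ). In particular, if M is in addition a left H-module which is stable (Σ m₍₋₁₎•m₍₀₎ = m for all m ∈ M), the failure of τ_n^{n+1} to be the identity is measured exactly by the diagonal H-action twisted by the coaction of M. -/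

import Mathlib

/-!
STATEMENT 10: Let `H` be a bialgebra over `k`, `C` a left `H`-module, and `M` a left
`H`-comodule with coaction `m ↦ Σ m₍₋₁₎⊗m₍₀₎`.  For `n ≥ 0` define the operator `τ_n` on
`C^{⊗(n+1)}⊗M` by `τ_n(c⁰⊗⋯⊗cⁿ⊗m) = Σ c¹⊗⋯⊗cⁿ⊗(m₍₋₁₎•c⁰)⊗m₍₀₎`.  Then
`τ_n^{n+1}(c⁰⊗⋯⊗cⁿ⊗m) = Σ (m₍₋₁₎•(c⁰⊗⋯⊗cⁿ))⊗m₍₀₎`, where `H` acts diagonally on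
`C^{⊗(n+1)}` via the iterated comultiplication.

Here `C^{⊗(n+1)}` is modelled as the nested tensor power `TP k C n = C ⊗ (C ⊗ (⋯ ⊗ C))`,
and both `τ_n` and the coaction-twisted diagonal action are expressed as compositions of
linear maps (which is exactly the Sweedler-notation formula, universally quantified).
-/

open TensorProduct

noncomputable section

universe u v w

variable (k : Type u) [Field k]

/-- A bundled `k`-module. -/
structure ModBundle where
  carrier : Type v
  [instAdd : AddCommGroup carrier]
  [instMod : Module k carrier]

attribute [instance] ModBundle.instAdd ModBundle.instMod

variable (C : Type v) [AddCommGroup C] [Module k C]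

/-- The bundled iterated tensor power `C^{⊗(n+1)}`. -/
def TPB : ℕ → ModBundle k
  | 0 => ⟨C⟩
  | n + 1 => ⟨C ⊗[k] (TPB n).carrier⟩

/-- `TP k C n = C^{⊗(n+1)}`, nested as `C ⊗ (C ⊗ (⋯ ⊗ C))`. -/
def TP (n : ℕ) : Type v := (TPB k C n).carrier

instance (n : ℕ) : AddCommGroup (TP k C n) := (TPB k C n).instAdd
instance (n : ℕ) : Module k (TP k C n) := (TPB k C n).instMod

variable (H : Type w) [Semiring H] [Bialgebra k H]
  [Module H C] [IsScalarTower k H C] [SMulCommClass k H C]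

/-- The action of `H` on `C` as a `k`-bilinear map. -/
def actBil : H →ₗ[k] C →ₗ[k] C :=
  LinearMap.mk₂ k (fun h c => h • c)
    (fun h h' c => add_smul h h' c)
    (fun a h c => smul_assoc a h c)
    (fun h c c' => smul_add h c c')
    (fun a h c => (smul_comm a h c).symm)

/-- The action of `H` on `C` as a linear map `H ⊗ C → C`. -/
def act : H ⊗[k] C →ₗ[k] C := TensorProduct.lift (actBil k C H)

/-- The diagonal action of `H` on `C^{⊗(n+1)}` via iterated comultiplication:
`h ⊗ (c⁰⊗⋯⊗cⁿ) ↦ Σ (h₍₁₎•c⁰)⊗⋯⊗(h₍ₙ₊₁₎•cⁿ)`. -/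
def diagAct : (n : ℕ) → H ⊗[k] TP k C n →ₗ[k] TP k C n
  | 0 => act k C H
  | n + 1 =>
    (TensorProduct.map (act k C H) (diagAct n) ∘ₗ
      (TensorProduct.tensorTensorTensorComm k H H C (TP k C n)).toLinearMap ∘ₗ
      TensorProduct.map Coalgebra.comul LinearMap.id :
        H ⊗[k] (C ⊗[k] TP k C n) →ₗ[k] C ⊗[k] TP k C n)

/-- Appending a tensor factor at the end: `(c⁰⊗⋯⊗cⁿ) ⊗ d ↦ c⁰⊗⋯⊗cⁿ⊗d`. -/
def app : (n : ℕ) → TP k C n ⊗[k] C →ₗ[k] TP k C (n + 1)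
  | 0 => (LinearMap.id : C ⊗[k] C →ₗ[k] C ⊗[k] C)
  | n + 1 =>
    (TensorProduct.map LinearMap.id (app n) ∘ₗ
      (TensorProduct.assoc k C (TP k C n) C).toLinearMap :
        (C ⊗[k] TP k C n) ⊗[k] C →ₗ[k] C ⊗[k] TP k C (n + 1))

/-- The twisted cyclic rotation `h ⊗ (c⁰⊗⋯⊗cⁿ) ↦ c¹⊗⋯⊗cⁿ⊗(h•c⁰)`. -/
def rot : (n : ℕ) → H ⊗[k] TP k C n →ₗ[k] TP k C n
  | 0 => act k C H
  | n + 1 =>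
    (app k C n ∘ₗ
      TensorProduct.map LinearMap.id (act k C H) ∘ₗ
      (TensorProduct.comm k (H ⊗[k] C) (TP k C n)).toLinearMap ∘ₗ
      (TensorProduct.assoc k H C (TP k C n)).symm.toLinearMap :
        H ⊗[k] (C ⊗[k] TP k C n) →ₗ[k] C ⊗[k] TP k C n)

variable (M : Type v) [AddCommGroup M] [Module k M] (ρ : M →ₗ[k] H ⊗[k] M)

/-- Twist `C^{⊗(n+1)} ⊗ M → C^{⊗(n+1)} ⊗ M` along the coaction `ρ` of `M` by an operator
`g : H ⊗ C^{⊗(n+1)} → C^{⊗(n+1)}`: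
`(c⁰⊗⋯⊗cⁿ) ⊗ m ↦ Σ g(m₍₋₁₎ ⊗ (c⁰⊗⋯⊗cⁿ)) ⊗ m₍₀₎`. -/
def coactTwist (n : ℕ) (g : H ⊗[k] TP k C n →ₗ[k] TP k C n) :
    TP k C n ⊗[k] M →ₗ[k] TP k C n ⊗[k] M :=
  TensorProduct.map g LinearMap.id ∘ₗ
    TensorProduct.map (TensorProduct.comm k (TP k C n) H).toLinearMap LinearMap.id ∘ₗ
    (TensorProduct.assoc k (TP k C n) H M).symm.toLinearMap ∘ₗ
    TensorProduct.map LinearMap.id ρ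

/-- The cyclic operator `τ_n(c⁰⊗⋯⊗cⁿ⊗m) = Σ c¹⊗⋯⊗cⁿ⊗(m₍₋₁₎•c⁰)⊗m₍₀₎`. -/
def tau (n : ℕ) : TP k C n ⊗[k] M →ₗ[k] TP k C n ⊗[k] M :=
  coactTwist k C H M ρ n (rot k C H n)

/-! ### Auxiliary machinery for the proof -/

/-- Insertion of a `C`-factor at position `j` (counted from the front, saturating at the
end): `(c⁰⊗⋯⊗cⁿ) ⊗ d ↦ c⁰⊗⋯⊗c^{j-1}⊗d⊗c^j⊗⋯⊗cⁿ`. -/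
def ins : (n j : ℕ) → TP k C n ⊗[k] C →ₗ[k] TP k C (n + 1)
  | n, 0 =>
    ((TensorProduct.comm k (TP k C n) C).toLinearMap :
        TP k C n ⊗[k] C →ₗ[k] C ⊗[k] TP k C n)
  | 0, _ + 1 => (LinearMap.id : C ⊗[k] C →ₗ[k] C ⊗[k] C)
  | n + 1, j + 1 =>
    (TensorProduct.map LinearMap.id (ins n j) ∘ₗ
      (TensorProduct.assoc k C (TP k C n) C).toLinearMap :
        (C ⊗[k] TP k C n) ⊗[k] C →ₗ[k] C ⊗[k] TP k C (n + 1))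

/-- Convolution-style composition of two operators `H ⊗ X → X`:
`(F ⋆ G)(h ⊗ x) = Σ F(h₍₂₎ ⊗ G(h₍₁₎ ⊗ x))`. -/
def conv {X : Type v} [AddCommGroup X] [Module k X]
    (F G : H ⊗[k] X →ₗ[k] X) : H ⊗[k] X →ₗ[k] X :=
  F ∘ₗ TensorProduct.map LinearMap.id G ∘ₗ
    (TensorProduct.assoc k H H X).toLinearMap ∘ₗ
    TensorProduct.map ((TensorProduct.comm k H H).toLinearMap ∘ₗ Coalgebra.comul)
      LinearMap.id

/-- Iterated convolution powers of the cyclic rotation: `cpow n m` is the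
`(m+1)`-fold convolution power of `rot n`. -/
def cpow (n : ℕ) : ℕ → (H ⊗[k] TP k C n →ₗ[k] TP k C n)
  | 0 => rot k C H n
  | m + 1 => conv k H (cpow n m) (rot k C H n)

lemma act_tmul (h : H) (c : C) : act k C H (h ⊗ₜ[k] c) = h • c := rfl

lemma conv_tmul {X : Type v} [AddCommGroup X] [Module k X]
    (F G : H ⊗[k] X →ₗ[k] X) (h : H) (x : X) :
    conv k H F G (h ⊗ₜ[k] x)
      = F (TensorProduct.map LinearMap.id G
          ((TensorProduct.assoc k H H X)
            ((TensorProduct.comm k H H (Coalgebra.comul h)) ⊗ₜ[k] x))) := by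
  simp [conv]

lemma app_tmul (n : ℕ) (c : C) (t : TP k C n) (d : C) :
    app k C (n + 1) ((c ⊗ₜ[k] t) ⊗ₜ[k] d) = c ⊗ₜ[k] app k C n (t ⊗ₜ[k] d) := rfl

lemma ins_zero_tmul (n : ℕ) (t : TP k C n) (d : C) :
    ins k C n 0 (t ⊗ₜ[k] d) = d ⊗ₜ[k] t := by
  simp only [ins]
  exact TensorProduct.comm_tmul k (TP k C n) C t d

lemma ins_succ_tmul (n j : ℕ) (c : C) (t : TP k C n) (d : C) :
    ins k C (n + 1) (j + 1) ((c ⊗ₜ[k] t) ⊗ₜ[k] d) = c ⊗ₜ[k] ins k C n j (t ⊗ₜ[k] d) := rfl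

lemma app_eq_ins : ∀ n : ℕ, app k C n = ins k C n (n + 1)
  | 0 => rfl
  | n + 1 => by
    show app k C (n+1) = _
    rw [show (ins k C (n+1) (n+2)) = (TensorProduct.map LinearMap.id (ins k C n (n+1)) ∘ₗ
      (TensorProduct.assoc k C (TP k C n) C).toLinearMap :
        (C ⊗[k] TP k C n) ⊗[k] C →ₗ[k] C ⊗[k] TP k C (n + 1)) from rfl]
    rw [← app_eq_ins n]
    rfl

lemma rot_succ_tmul (n : ℕ) (h : H) (c : C) (t : TP k C n) :
    rot k C H (n + 1) (h ⊗ₜ[k] (c ⊗ₜ[k] t : TP k C (n + 1)))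
      = app k C n (t ⊗ₜ[k] (h • c)) := rfl

/-- An induction principle for `TP k C (n+1)`. -/
lemma tp_succ_induction (n : ℕ) {motive : TP k C (n + 1) → Prop} (x : TP k C (n + 1))
    (zero : motive 0) (tmul : ∀ (c : C) (t : TP k C n), motive (c ⊗ₜ[k] t))
    (add : ∀ x y, motive x → motive y → motive (x + y)) : motive x :=
  TensorProduct.induction_on x zero tmul add

lemma app_ins_swap : ∀ n j, j ≤ n + 1 → ∀ (t : TP k C n) (d e : C),
    app k C (n + 1) (ins k C n j (t ⊗ₜ[k] d) ⊗ₜ[k] e)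
      = ins k C (n + 1) j (app k C n (t ⊗ₜ[k] e) ⊗ₜ[k] d) := by
  intro n
  induction n with
  | zero =>
    rintro (_ | j) hj t d e
    · erw [ins_zero_tmul, app_tmul]
    · obtain rfl : j = 0 := by omega
      rfl
  | succ n IH =>
    rintro (_ | j) hj t d e
    · erw [ins_zero_tmul, app_tmul]
    · induction t using tp_succ_induction k C n with
      | zero => simp [zero_tmul, tmul_zero]
      | tmul c t' =>
        rw [ins_succ_tmul]
        show c ⊗ₜ[k] app k C (n + 1) (ins k C n j (t' ⊗ₜ[k] d) ⊗ₜ[k] e)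
          = c ⊗ₜ[k] ins k C (n + 1) j (app k C n (t' ⊗ₜ[k] e) ⊗ₜ[k] d)
        rw [IH j (by omega)]
      | add x y hx hy => simp only [add_tmul, map_add, hx, hy]

lemma rot_ins : ∀ n p, 1 ≤ p → p ≤ n + 1 → ∀ (g : H) (t : TP k C n) (d : C),
    rot k C H (n + 1) (g ⊗ₜ[k] ins k C n p (t ⊗ₜ[k] d))
      = ins k C n (p - 1) (rot k C H n (g ⊗ₜ[k] t) ⊗ₜ[k] d) := by
  intro n
  match n with
  | 0 =>
    intro p h1 h2 g t d
    interval_cases p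
    show rot k C H 1 (g ⊗ₜ[k] (t ⊗ₜ[k] d : TP k C 1)) = _
    erw [rot_succ_tmul]
  | n + 1 =>
    rintro (_ | p) h1 h2 g t d
    · omega
    · induction t using tp_succ_induction k C n with
      | zero => simp [zero_tmul, tmul_zero]
      | tmul c t' =>
        match p with
        | 0 =>
          erw [ins_succ_tmul, ins_zero_tmul, rot_succ_tmul, app_tmul]
        | p + 1 =>
          erw [ins_succ_tmul, rot_succ_tmul, app_ins_swap k C n (p + 1) (by omega),
            show p + 1 + 1 - 1 = p + 1 from rfl, rot_succ_tmul]
      | add x y hx hy => simp only [add_tmul, tmul_add, map_add, hx, hy]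

lemma cpow_ins (n : ℕ) : ∀ m p, m + 1 ≤ p → p ≤ n + 1 →
    ∀ (h : H) (t : TP k C n) (d : C),
    cpow k C H (n + 1) m (h ⊗ₜ[k] ins k C n p (t ⊗ₜ[k] d))
      = ins k C n (p - (m + 1)) (cpow k C H n m (h ⊗ₜ[k] t) ⊗ₜ[k] d) := by
  intro m
  induction m with
  | zero =>
    intro p h1 h2 h t d
    exact rot_ins k C H n p h1 h2 h t d
  | succ m IH =>
    intro p h1 h2 h t d
    show conv k H (cpow k C H (n + 1) m) (rot k C H (n + 1)) _
      = ins k C n _ (conv k H (cpow k C H n m) (rot k C H n) _ ⊗ₜ[k] d)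
    rw [conv_tmul, conv_tmul]
    generalize (TensorProduct.comm k H H) (Coalgebra.comul h) = u
    induction u using TensorProduct.induction_on with
    | zero => simp [zero_tmul, tmul_zero]
    | tmul a b =>
      rw [assoc_tmul, assoc_tmul, map_tmul, map_tmul]
      simp only [LinearMap.id_coe, id_eq]
      rw [rot_ins k C H n p (by omega) h2, IH (p - 1) (by omega) (by omega),
        show p - 1 - (m + 1) = p - (m + 1 + 1) from by omega]
    | add x y hx hy =>
      simp only [add_tmul, map_add, hx, hy, tmul_add]

lemma cpow_diag : ∀ n, cpow k C H n n = diagAct k C H n := by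
  intro n
  induction n with
  | zero => rfl
  | succ n IH =>
    apply TensorProduct.ext'
    intro h x
    induction x using tp_succ_induction k C n with
    | zero => simp [tmul_zero]
    | tmul c t =>
      show conv k H (cpow k C H (n + 1) n) (rot k C H (n + 1)) _
        = TensorProduct.map (act k C H) (diagAct k C H n)
            ((TensorProduct.tensorTensorTensorComm k H H C (TP k C n))
              ((Coalgebra.comul h) ⊗ₜ[k] (c ⊗ₜ[k] t)))
      erw [conv_tmul]
      generalize Coalgebra.comul (R := k) h = u
      induction u using TensorProduct.induction_on with
      | zero => erw [map_zero, zero_tmul, map_zero]; rfl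
      | tmul a b =>
        have h1 := rot_succ_tmul k C H n a c t
        have h2 := cpow_ins k C H n n (n + 1) le_rfl le_rfl b t (a • c)
        rw [← app_eq_ins, show n + 1 - (n + 1) = 0 from by omega] at h2
        have h3 := ins_zero_tmul k C n (cpow k C H n n (b ⊗ₜ[k] t)) (a • c)
        show cpow k C H (n + 1) n
            (b ⊗ₜ[k] rot k C H (n + 1) (a ⊗ₜ[k] (c ⊗ₜ[k] t : TP k C (n + 1))))
          = TensorProduct.map (act k C H) (diagAct k C H n) ((a ⊗ₜ[k] c) ⊗ₜ[k] (b ⊗ₜ[k] t))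
        exact (congrArg (fun z => cpow k C H (n + 1) n (b ⊗ₜ[k] z)) h1).trans
          (h2.trans (h3.trans (congrArg (fun F => (a • c) ⊗ₜ[k] F (b ⊗ₜ[k] t)) IH)))
      | add x y hx hy =>
        simp only [map_add]
        refine (congrArg (fun z => cpow k C H (n + 1) n (TensorProduct.map LinearMap.id
          (rot k C H (n + 1)) (TensorProduct.assoc k H H (TP k C (n + 1)) z)))
          (add_tmul (TensorProduct.comm k H H x) (TensorProduct.comm k H H y)
            (c ⊗ₜ[k] t : TP k C (n + 1)))).trans ?_
        refine Eq.trans ?_ ((congrArg₂ (· + ·) hx hy).trans ?_)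
        · exact (congrArg (cpow k C H (n + 1) n)
            ((congrArg (TensorProduct.map LinearMap.id (rot k C H (n + 1)))
              (map_add (TensorProduct.assoc k H H (TP k C (n + 1))) _ _)).trans
              (map_add (TensorProduct.map LinearMap.id (rot k C H (n + 1))) _ _))).trans
            (map_add (cpow k C H (n + 1) n) _ _)
        · exact ((congrArg (TensorProduct.map (act k C H) (diagAct k C H n))
            ((congrArg (TensorProduct.tensorTensorTensorComm k H H C (TP k C n))
              (add_tmul x y (c ⊗ₜ[k] t : C ⊗[k] TP k C n))).trans
              (map_add (TensorProduct.tensorTensorTensorComm k H H C (TP k C n)) _ _))).trans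
            (map_add (TensorProduct.map (act k C H) (diagAct k C H n)) _ _)).symm
    | add x y hx hy => simp only [tmul_add, map_add, hx, hy]

lemma ct_tmul (n : ℕ) (F : H ⊗[k] TP k C n →ₗ[k] TP k C n) (t : TP k C n) (m : M) :
    coactTwist k C H M ρ n F (t ⊗ₜ[k] m)
      = TensorProduct.map (F ∘ₗ (TensorProduct.mk k H (TP k C n)).flip t)
          LinearMap.id (ρ m) := by
  simp only [coactTwist, LinearMap.comp_apply, LinearEquiv.coe_coe, map_tmul,
    LinearMap.id_coe, id_eq]
  generalize ρ m = w
  induction w using TensorProduct.induction_on with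
  | zero => simp [tmul_zero]
  | tmul a m' =>
    simp only [assoc_symm_tmul, map_tmul, comm_tmul, LinearMap.id_coe, id_eq,
      LinearMap.comp_apply, LinearMap.flip_apply, mk_apply]
    exact congrArg (· ⊗ₜ[k] m') (congrArg F (TensorProduct.comm_tmul k (TP k C n) H t a))
  | add x y hx hy => simp only [tmul_add, map_add, hx, hy]

lemma coactTwist_conv (n : ℕ)
    (hco : (TensorProduct.assoc k H H M).toLinearMap ∘ₗ
        TensorProduct.map Coalgebra.comul LinearMap.id ∘ₗ ρ
      = TensorProduct.map LinearMap.id ρ ∘ₗ ρ)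
    (F G : H ⊗[k] TP k C n →ₗ[k] TP k C n) :
    coactTwist k C H M ρ n F ∘ₗ coactTwist k C H M ρ n G
      = coactTwist k C H M ρ n (conv k H F G) := by
  apply TensorProduct.ext'
  intro t m
  set S : H →ₗ[k] TP k C n := G ∘ₗ (TensorProduct.mk k H (TP k C n)).flip t with hS
  set Θ : H ⊗[k] (H ⊗[k] M) →ₗ[k] TP k C n ⊗[k] M :=
    TensorProduct.map F LinearMap.id ∘ₗ
      TensorProduct.map (TensorProduct.comm k (TP k C n) H).toLinearMap LinearMap.id ∘ₗ
      (TensorProduct.assoc k (TP k C n) H M).symm.toLinearMap ∘ₗ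
      TensorProduct.map S LinearMap.id with hΘ
  have hA : ∀ w : H ⊗[k] M,
      coactTwist k C H M ρ n F (TensorProduct.map S LinearMap.id w)
        = Θ (TensorProduct.map LinearMap.id ρ w) := by
    intro w
    induction w using TensorProduct.induction_on with
    | zero => simp
    | tmul a m' =>
      simp only [map_tmul, LinearMap.id_coe, id_eq]
      rw [ct_tmul]
      generalize ρ m' = z
      induction z using TensorProduct.induction_on with
      | zero => simp [tmul_zero]
      | tmul b m'' =>
        simp only [hΘ, map_tmul, LinearMap.comp_apply, LinearMap.flip_apply,
          mk_apply, LinearMap.id_coe, id_eq, LinearEquiv.coe_coe,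
          assoc_symm_tmul, comm_tmul]
      | add x y hx hy => simp only [tmul_add, map_add, hx, hy]
    | add x y hx hy => simp only [map_add, hx, hy]
  have hB : ∀ w : H ⊗[k] M,
      TensorProduct.map ((conv k H F G) ∘ₗ (TensorProduct.mk k H (TP k C n)).flip t)
          LinearMap.id w
        = Θ ((TensorProduct.assoc k H H M)
            (TensorProduct.map Coalgebra.comul LinearMap.id w)) := by
    intro w
    induction w using TensorProduct.induction_on with
    | zero => simp
    | tmul h m' =>
      simp only [map_tmul, LinearMap.comp_apply, LinearMap.flip_apply, mk_apply,
        LinearMap.id_coe, id_eq]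
      rw [conv_tmul]
      generalize Coalgebra.comul (R := k) h = u
      induction u using TensorProduct.induction_on with
      | zero => simp [zero_tmul, tmul_zero]
      | tmul a b =>
        simp only [comm_tmul, assoc_tmul, map_tmul, LinearMap.id_coe, id_eq, hΘ,
          LinearMap.comp_apply, LinearEquiv.coe_coe, assoc_symm_tmul,
          LinearMap.flip_apply, mk_apply, hS]
      | add x y hx hy =>
        simp only [add_tmul, tmul_add, map_add, LinearMap.add_apply, hx, hy]
    | add x y hx hy => simp only [map_add, hx, hy]
  rw [LinearMap.comp_apply, ct_tmul, ct_tmul, hB (ρ m)]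
  have := LinearMap.congr_fun hco m
  simp only [LinearMap.comp_apply, LinearEquiv.coe_coe] at this
  rw [this, ← hA (ρ m), hS]

lemma tau_pow (n : ℕ)
    (hco : (TensorProduct.assoc k H H M).toLinearMap ∘ₗ
        TensorProduct.map Coalgebra.comul LinearMap.id ∘ₗ ρ
      = TensorProduct.map LinearMap.id ρ ∘ₗ ρ) :
    ∀ m : ℕ, (tau k C H M ρ n) ^ (m + 1)
      = coactTwist k C H M ρ n (cpow k C H n m)
  | 0 => by rw [pow_one]; rfl
  | m + 1 => by
    rw [pow_succ, tau_pow n hco m, Module.End.mul_eq_comp,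
      show tau k C H M ρ n = coactTwist k C H M ρ n (rot k C H n) from rfl,
      coactTwist_conv k C H M ρ n hco]
    rfl

/-- If `M` is a left `H`-comodule (the coaction `ρ` is coassociative and
counital), then for every `n ≥ 0` the `(n+1)`-fold iterate of the cyclic operator `τ_n` on
`C^{⊗(n+1)} ⊗ M` is the diagonal action of `H` on `C^{⊗(n+1)}` twisted by the coaction of
`M`:  `τ_n^{n+1}(c⁰⊗⋯⊗cⁿ⊗m) = Σ (m₍₋₁₎•(c⁰⊗⋯⊗cⁿ))⊗m₍₀₎`. -/
theorem tau_pow_succ_eq_coaction_twist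
    (hcoassoc : (TensorProduct.assoc k H H M).toLinearMap ∘ₗ
        TensorProduct.map Coalgebra.comul LinearMap.id ∘ₗ ρ
      = TensorProduct.map LinearMap.id ρ ∘ₗ ρ)
    (hcounit : (TensorProduct.lid k M).toLinearMap ∘ₗ
        TensorProduct.map (Coalgebra.counit (R := k)) LinearMap.id ∘ₗ ρ = LinearMap.id) :
    ∀ n : ℕ,
      (tau k C H M ρ n) ^ (n + 1) = coactTwist k C H M ρ n (diagAct k C H n) := by
  intro n
  rw [tau_pow k C H M ρ n hcoassoc n, cpow_diag]

end
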